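/- Let R be a commutative ring, p a prime number, and u, v ∈ R elements with u^p · v ∈ pR. Suppose that every element of R is congruent to a p-th power modulo u^p·R (for every x there exist y, z with x = y^p + u^p·z) and that every element of R is congruent to a p-th power modulo v·R. Then every element of R is congruent to a p-th power modulo pR: for every a ∈ R there exist w, z ∈ R with a = w^p + p·z. Moreover one may take w = b + u·d, where a = b^p + u^p·c and c = d^p + v·e. -/

import Mathlib

/-- Bootstrapping surjectivity of Frobenius modulo `p`: if `u^p * v ∈ pR`, every element
of `R` is a `p`-th power modulo `u^p·R` and every element is a `p`-th power modulo
`v·R`, then every element is a `p`-th power modulo `pR`; moreover one may take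
`w = b + u * d` where `a = b^p + u^p * c` and `c = d^p + v * e`. -/
theorem stmt12 {R : Type*} [CommRing R] (p : ℕ) (hp : p.Prime) (u v : R)
    (huv : (p : R) ∣ u ^ p * v)
    (h1 : ∀ x : R, ∃ y z : R, x = y ^ p + u ^ p * z)
    (h2 : ∀ x : R, ∃ y z : R, x = y ^ p + v * z) :
    (∀ a : R, ∃ w z : R, a = w ^ p + p * z) ∧
    (∀ a b c d e : R, a = b ^ p + u ^ p * c → c = d ^ p + v * e →
      ∃ z : R, a = (b + u * d) ^ p + p * z) := by
  obtain ⟨q, hq⟩ := huv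
  have key : ∀ a b c d e : R, a = b ^ p + u ^ p * c → c = d ^ p + v * e →
      ∃ z : R, a = (b + u * d) ^ p + p * z := by
    intro a b c d e hbc hde
    obtain ⟨r, hr⟩ := exists_add_pow_prime_eq hp b (u * d)
    refine ⟨q * e - b * (u * d) * r, ?_⟩
    have : a = b ^ p + (u * d) ^ p + u ^ p * v * e := by
      rw [hbc, hde, mul_pow]; ring
    rw [this, hq, hr]; ring
  refine ⟨fun a => ?_, key⟩
  obtain ⟨b, c, hbc⟩ := h1 a
  obtain ⟨d, e, hde⟩ := h2 c
  obtain ⟨z, hz⟩ := key a b c d e hbc hde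
  exact ⟨b + u * d, z, hz⟩
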